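/- Let X and Y be nonnegative random variables defined on a common probability space and let C > 0. Assume that P(X > t) ~ C t^{-1/2} as t → ∞, i.e. lim_{t→∞} t^{1/2} P(X > t) = C. Then the following two assertions are equivalent: (i) lim_{t→∞} t^{1/2} P(Y > t) = 0; (ii) P(X + Y > t) ~ C t^{-1/2} as t → ∞, i.e. lim_{t→∞} t^{1/2} P(X + Y > t) = C. (No independence between X and Y is assumed.) -/

import Mathlib

open MeasureTheory Filter Topology


lemma scale_aux (φ : ℝ → ℝ) (L a : ℝ) (ha : 0 < a)
    (h : Tendsto (fun t : ℝ => t ^ ((1:ℝ)/2) * φ t) atTop (𝓝 L)) :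
    Tendsto (fun t : ℝ => t ^ ((1:ℝ)/2) * φ (a * t)) atTop
      (𝓝 (a ^ (-((1:ℝ)/2)) * L)) := by
  have hcomp : Tendsto (fun t : ℝ => (a*t) ^ ((1:ℝ)/2) * φ (a * t)) atTop (𝓝 L) :=
    h.comp (tendsto_id.const_mul_atTop ha)
  have h2 := hcomp.const_mul (a ^ (-((1:ℝ)/2)))
  refine Tendsto.congr' ?_ h2
  filter_upwards [eventually_ge_atTop (0:ℝ)] with t ht
  have h1 : a ^ (-((1:ℝ)/2)) * a ^ ((1:ℝ)/2) = 1 := by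
    rw [← Real.rpow_add ha]; norm_num
  rw [Real.mul_rpow ha.le ht,
    show a ^ (-((1:ℝ)/2)) * (a ^ ((1:ℝ)/2) * t ^ ((1:ℝ)/2) * φ (a*t))
      = (a ^ (-((1:ℝ)/2)) * a ^ ((1:ℝ)/2)) * (t ^ ((1:ℝ)/2) * φ (a*t)) by ring,
    h1, one_mul]

lemma toReal_union_le {Ω : Type*} [MeasurableSpace Ω] (μ : Measure Ω) [IsFiniteMeasure μ]
    (A B : Set Ω) : (μ (A ∪ B)).toReal ≤ (μ A).toReal + (μ B).toReal := by
  rw [← ENNReal.toReal_add (measure_ne_top μ A) (measure_ne_top μ B)]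
  exact ENNReal.toReal_mono (ENNReal.add_ne_top.2 ⟨measure_ne_top μ A, measure_ne_top μ B⟩)
    (measure_union_le A B)

lemma toReal_mono_meas {Ω : Type*} [MeasurableSpace Ω] (μ : Measure Ω) [IsFiniteMeasure μ]
    {A B : Set Ω} (h : A ⊆ B) : (μ A).toReal ≤ (μ B).toReal :=
  ENNReal.toReal_mono (measure_ne_top μ B) (measure_mono h)

lemma toReal_diff_eq {Ω : Type*} [MeasurableSpace Ω] (μ : Measure Ω) [IsFiniteMeasure μ]
    {A B : Set Ω} (hB : NullMeasurableSet B μ) (hBA : B ⊆ A) :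
    (μ (A \ B)).toReal = (μ A).toReal - (μ B).toReal := by
  rw [measure_diff hBA hB (measure_ne_top μ B),
      ENNReal.toReal_sub_of_le (measure_mono hBA) (measure_ne_top μ A)]

/-- Lemma A.1 (`equiv_tail`): for nonnegative random variables `X`, `Y` with
`P(X > t) ~ C t^{-1/2}` as `t → ∞`, one has
`lim t^{1/2} P(Y > t) = 0` iff `P(X + Y > t) ~ C t^{-1/2}`. -/
theorem stmt0
    {Ω : Type*} [MeasurableSpace Ω] (μ : Measure Ω) [IsProbabilityMeasure μ]
    (X Y : Ω → ℝ) (hX : Measurable X) (hY : Measurable Y)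
    (hXpos : ∀ ω, 0 ≤ X ω) (hYpos : ∀ ω, 0 ≤ Y ω)
    (C : ℝ) (hC : 0 < C)
    (hXtail : Tendsto (fun t : ℝ => t ^ ((1 : ℝ) / 2) * (μ {ω | t < X ω}).toReal)
      atTop (𝓝 C)) :
    Tendsto (fun t : ℝ => t ^ ((1 : ℝ) / 2) * (μ {ω | t < Y ω}).toReal) atTop (𝓝 0)
      ↔ Tendsto (fun t : ℝ => t ^ ((1 : ℝ) / 2) * (μ {ω | t < X ω + Y ω}).toReal)
          atTop (𝓝 C) := by
  constructor
  · -- forward direction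
    intro hG
    rw [Metric.tendsto_nhds]
    intro ε hε
    set b : ℝ := C / (C + ε/2) with hbdef
    have hb0 : 0 < b := div_pos hC (by linarith)
    have hb1 : b < 1 := (div_lt_one (by linarith)).2 (by linarith)
    set a : ℝ := b ^ (2:ℝ) with hadef
    have ha0 : 0 < a := Real.rpow_pos_of_pos hb0 _
    have ha1 : a < 1 := Real.rpow_lt_one hb0.le hb1 (by norm_num)
    have hainv : a ^ (-((1:ℝ)/2)) = b⁻¹ := by
      rw [hadef, ← Real.rpow_mul hb0.le]
      norm_num [Real.rpow_neg_one]
    have hval : a ^ (-((1:ℝ)/2)) * C = C + ε/2 := by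
      rw [hainv, hbdef, inv_div]
      field_simp
    have hFa := scale_aux (fun s => (μ {ω | s < X ω}).toReal) C a ha0 hXtail
    have hGe := scale_aux (fun s => (μ {ω | s < Y ω}).toReal) 0 (1-a) (by linarith) hG
    have hUB : Tendsto (fun t : ℝ => t ^ ((1:ℝ)/2) * (μ {ω | a*t < X ω}).toReal
        + t ^ ((1:ℝ)/2) * (μ {ω | (1-a)*t < Y ω}).toReal) atTop (𝓝 (C + ε/2)) := by
      have := hFa.add hGe
      rw [mul_zero, add_zero, hval] at this
      exact this
    have hub_ev := hUB.eventually_lt_const (show C + ε/2 < C + ε by linarith)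
    have hlb_ev := hXtail.eventually_const_lt (show C - ε < C by linarith)
    filter_upwards [hub_ev, hlb_ev, eventually_ge_atTop (0:ℝ)] with t hub hlb ht
    have hrt : (0:ℝ) ≤ t ^ ((1:ℝ)/2) := Real.rpow_nonneg ht _
    have hFH : (μ {ω | t < X ω}).toReal ≤ (μ {ω | t < X ω + Y ω}).toReal := by
      refine toReal_mono_meas μ ?_
      intro ω hω
      simp only [Set.mem_setOf_eq] at *
      linarith [hYpos ω]
    have hHsplit : (μ {ω | t < X ω + Y ω}).toReal ≤
        (μ {ω | a*t < X ω}).toReal + (μ {ω | (1-a)*t < Y ω}).toReal := by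
      refine le_trans (toReal_mono_meas μ ?_) (toReal_union_le μ _ _)
      intro ω hω
      simp only [Set.mem_setOf_eq, Set.mem_union] at *
      by_contra hcon
      push_neg at hcon
      obtain ⟨h1, h2⟩ := hcon
      linarith
    have m1 : t ^ ((1:ℝ)/2) * (μ {ω | t < X ω}).toReal
        ≤ t ^ ((1:ℝ)/2) * (μ {ω | t < X ω + Y ω}).toReal :=
      mul_le_mul_of_nonneg_left hFH hrt
    have m2 : t ^ ((1:ℝ)/2) * (μ {ω | t < X ω + Y ω}).toReal
        ≤ t ^ ((1:ℝ)/2) * ((μ {ω | a*t < X ω}).toReal + (μ {ω | (1-a)*t < Y ω}).toReal) :=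
      mul_le_mul_of_nonneg_left hHsplit hrt
    rw [mul_add] at m2
    rw [Real.dist_eq, abs_lt]
    constructor <;> linarith
  · -- backward direction
    intro hH
    rw [Metric.tendsto_nhds]
    intro ε hε
    have hk : ∃ k : ℕ, 1 ≤ k ∧ ((k:ℝ)) ^ (-((1:ℝ)/2)) * C < ε := by
      have h1 : Tendsto (fun n : ℕ => ((n:ℝ)) ^ (-((1:ℝ)/2)) * C) atTop (𝓝 0) := by
        have h2 := (tendsto_rpow_neg_atTop (by norm_num : (0:ℝ) < (1:ℝ)/2)).comp
          tendsto_natCast_atTop_atTop (α := ℕ)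
        simpa using h2.mul_const C
      obtain ⟨k, hk⟩ := ((h1.eventually_lt_const hε).and (eventually_ge_atTop 1)).exists
      exact ⟨k, hk.2, hk.1⟩
    obtain ⟨k, hk1, hkε⟩ := hk
    -- key ladder inequality
    have key : ∀ (m : ℕ) (t : ℝ), 0 < t →
        (μ {ω | t < Y ω ∧ X ω < (m:ℝ) * t}).toReal ≤
          ∑ j ∈ Finset.Icc 1 m, ((μ {ω | (j:ℝ)*t < X ω + Y ω}).toReal
            - (μ {ω | (j:ℝ)*t < X ω}).toReal) := by
      intro m
      induction m with
      | zero =>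
        intro t ht
        have hempty : {ω | t < Y ω ∧ X ω < ((0:ℕ):ℝ) * t} = (∅ : Set Ω) := by
          ext ω
          simp only [Set.mem_setOf_eq, Set.mem_empty_iff_false, iff_false, not_and]
          intro _
          simp only [Nat.cast_zero, zero_mul, not_lt]
          exact hXpos ω
        rw [hempty]
        simp
      | succ m ih =>
        intro t ht
        have hsub : {ω | t < Y ω ∧ X ω < ((m+1:ℕ):ℝ)*t} ⊆
            {ω | t < Y ω ∧ X ω < (m:ℝ)*t} ∪
            ({ω | ((m+1:ℕ):ℝ)*t < X ω + Y ω} \ {ω | ((m+1:ℕ):ℝ)*t < X ω}) := by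
          intro ω hω
          simp only [Set.mem_setOf_eq, Set.mem_union, Set.mem_diff] at *
          obtain ⟨h1, h2⟩ := hω
          by_cases hc : X ω < (m:ℝ)*t
          · exact Or.inl ⟨h1, hc⟩
          · push_neg at hc
            push_cast at h2 ⊢
            exact Or.inr ⟨by nlinarith, not_lt.2 h2.le⟩
        have hdiff : (μ ({ω | ((m+1:ℕ):ℝ)*t < X ω + Y ω} \ {ω | ((m+1:ℕ):ℝ)*t < X ω})).toReal
            = (μ {ω | ((m+1:ℕ):ℝ)*t < X ω + Y ω}).toReal
              - (μ {ω | ((m+1:ℕ):ℝ)*t < X ω}).toReal := by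
          refine toReal_diff_eq μ (measurableSet_lt measurable_const hX).nullMeasurableSet ?_
          intro ω hω
          simp only [Set.mem_setOf_eq] at *
          linarith [hYpos ω]
        calc (μ {ω | t < Y ω ∧ X ω < ((m+1:ℕ):ℝ)*t}).toReal
            ≤ (μ ({ω | t < Y ω ∧ X ω < (m:ℝ)*t} ∪
              ({ω | ((m+1:ℕ):ℝ)*t < X ω + Y ω} \ {ω | ((m+1:ℕ):ℝ)*t < X ω}))).toReal :=
              toReal_mono_meas μ hsub
          _ ≤ (μ {ω | t < Y ω ∧ X ω < (m:ℝ)*t}).toReal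
              + (μ ({ω | ((m+1:ℕ):ℝ)*t < X ω + Y ω} \ {ω | ((m+1:ℕ):ℝ)*t < X ω})).toReal :=
              toReal_union_le μ _ _
          _ ≤ (∑ j ∈ Finset.Icc 1 m, ((μ {ω | (j:ℝ)*t < X ω + Y ω}).toReal
                - (μ {ω | (j:ℝ)*t < X ω}).toReal))
              + ((μ {ω | ((m+1:ℕ):ℝ)*t < X ω + Y ω}).toReal
                - (μ {ω | ((m+1:ℕ):ℝ)*t < X ω}).toReal) := by
              rw [hdiff]
              exact add_le_add_left (ih t ht) _
          _ = ∑ j ∈ Finset.Icc 1 (m+1), ((μ {ω | (j:ℝ)*t < X ω + Y ω}).toReal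
                - (μ {ω | (j:ℝ)*t < X ω}).toReal) := by
              rw [Finset.sum_Icc_succ_top (Nat.succ_le_succ (Nat.zero_le m))]
    -- bound for G
    have bound : ∀ t : ℝ, 0 < t →
        t ^ ((1:ℝ)/2) * (μ {ω | t < Y ω}).toReal ≤
          (∑ j ∈ Finset.Icc 1 (k+1), (t ^ ((1:ℝ)/2) * (μ {ω | (j:ℝ)*t < X ω + Y ω}).toReal
            - t ^ ((1:ℝ)/2) * (μ {ω | (j:ℝ)*t < X ω}).toReal))
          + t ^ ((1:ℝ)/2) * (μ {ω | (k:ℝ)*t < X ω}).toReal := by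
      intro t ht
      have hsub : {ω | t < Y ω} ⊆ {ω | t < Y ω ∧ X ω < ((k+1:ℕ):ℝ)*t} ∪ {ω | (k:ℝ)*t < X ω} := by
        intro ω hω
        simp only [Set.mem_setOf_eq, Set.mem_union] at *
        by_cases hc : (k:ℝ)*t < X ω
        · exact Or.inr hc
        · push_neg at hc
          push_cast
          exact Or.inl ⟨hω, by nlinarith⟩
      have hG_le : (μ {ω | t < Y ω}).toReal ≤
          (∑ j ∈ Finset.Icc 1 (k+1), ((μ {ω | (j:ℝ)*t < X ω + Y ω}).toReal
            - (μ {ω | (j:ℝ)*t < X ω}).toReal))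
          + (μ {ω | (k:ℝ)*t < X ω}).toReal := by
        calc (μ {ω | t < Y ω}).toReal
            ≤ (μ {ω | t < Y ω ∧ X ω < ((k+1:ℕ):ℝ)*t}).toReal + (μ {ω | (k:ℝ)*t < X ω}).toReal :=
              le_trans (toReal_mono_meas μ hsub) (toReal_union_le μ _ _)
          _ ≤ _ := add_le_add_left (key (k+1) t ht) _
      have hrt : (0:ℝ) ≤ t ^ ((1:ℝ)/2) := Real.rpow_nonneg ht.le _
      have := mul_le_mul_of_nonneg_left hG_le hrt
      calc t ^ ((1:ℝ)/2) * (μ {ω | t < Y ω}).toReal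
          ≤ t ^ ((1:ℝ)/2) * ((∑ j ∈ Finset.Icc 1 (k+1), ((μ {ω | (j:ℝ)*t < X ω + Y ω}).toReal
              - (μ {ω | (j:ℝ)*t < X ω}).toReal))
            + (μ {ω | (k:ℝ)*t < X ω}).toReal) := this
        _ = _ := by
            rw [mul_add, Finset.mul_sum]
            congr 1
            refine Finset.sum_congr rfl fun j _ => ?_
            ring
    -- limit of the bound
    have hsum : Tendsto (fun t : ℝ => ∑ j ∈ Finset.Icc 1 (k+1),
        (t ^ ((1:ℝ)/2) * (μ {ω | (j:ℝ)*t < X ω + Y ω}).toReal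
          - t ^ ((1:ℝ)/2) * (μ {ω | (j:ℝ)*t < X ω}).toReal)) atTop (𝓝 0) := by
      have h0 : (0:ℝ) = ∑ j ∈ Finset.Icc 1 (k+1), (0:ℝ) := by simp
      rw [h0]
      refine tendsto_finset_sum _ (fun j hj => ?_)
      have hj1 : 1 ≤ j := (Finset.mem_Icc.1 hj).1
      have hjpos : (0:ℝ) < (j:ℝ) := by exact_mod_cast Nat.pos_of_ne_zero (by omega)
      have h1 := scale_aux (fun s => (μ {ω | s < X ω + Y ω}).toReal) C (j:ℝ) hjpos hH
      have h2 := scale_aux (fun s => (μ {ω | s < X ω}).toReal) C (j:ℝ) hjpos hXtail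
      simpa using h1.sub h2
    have hkpos : (0:ℝ) < (k:ℝ) := by exact_mod_cast hk1
    have hlast := scale_aux (fun s => (μ {ω | s < X ω}).toReal) C (k:ℝ) hkpos hXtail
    have hΦ : Tendsto (fun t : ℝ =>
        (∑ j ∈ Finset.Icc 1 (k+1), (t ^ ((1:ℝ)/2) * (μ {ω | (j:ℝ)*t < X ω + Y ω}).toReal
          - t ^ ((1:ℝ)/2) * (μ {ω | (j:ℝ)*t < X ω}).toReal))
        + t ^ ((1:ℝ)/2) * (μ {ω | (k:ℝ)*t < X ω}).toReal) atTop
        (𝓝 ((k:ℝ) ^ (-((1:ℝ)/2)) * C)) := by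
      have := hsum.add hlast
      rwa [zero_add] at this
    have hev := hΦ.eventually_lt_const hkε
    filter_upwards [hev, eventually_gt_atTop (0:ℝ)] with t hΦt ht
    have hrt : (0:ℝ) ≤ t ^ ((1:ℝ)/2) := Real.rpow_nonneg ht.le _
    have hnn : (0:ℝ) ≤ t ^ ((1:ℝ)/2) * (μ {ω | t < Y ω}).toReal :=
      mul_nonneg hrt ENNReal.toReal_nonneg
    rw [Real.dist_eq, sub_zero, abs_of_nonneg hnn]
    exact lt_of_le_of_lt (bound t ht) hΦt
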